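/- Let G be a purely non-abelian finite p-group and h : G → Ω_1(Z(G)) a non-trivial homomorphism. Then the map σ(x) = x·h(x) is an automorphism of G of order exactly p. -/

import Mathlib

open scoped Pointwise

/-- Let `G` be a purely non-abelian finite `p`-group and `h : G → Ω₁(Z(G))` a
non-trivial homomorphism.  Then the map `σ(x) = x * h(x)` is an automorphism of `G` of
order exactly `p`. -/
theorem purely_nonabelian_auto_order_p {p : ℕ} (hp : p.Prime) {G : Type*} [Group G]
    [Finite G] (hG : IsPGroup p G)
    (hpna : ¬ ∃ A B : Subgroup G, A.Normal ∧ B.Normal ∧ Disjoint A B ∧ A ⊔ B = ⊤ ∧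
      A ≠ ⊥ ∧ ∀ a b : G, a ∈ A → b ∈ A → a * b = b * a)
    (h : G →* G) (hmem : ∀ x : G, h x ∈ Subgroup.center G ∧ (h x) ^ p = 1)
    (hnt : ∃ x : G, h x ≠ 1) :
    Function.Bijective (fun x : G => x * h x) ∧
    (∀ x y : G, (x * y) * h (x * y) = (x * h x) * (y * h y)) ∧
    (fun x : G => x * h x)^[p] = id ∧
    (fun x : G => x * h x) ≠ id := by
  -- every subgroup containing ker h is normal
  have hcent : ∀ x : G, h x ∈ Subgroup.center G := fun x => (hmem x).1
  have hpow : ∀ x : G, (h x) ^ p = 1 := fun x => (hmem x).2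
  have hker_pow : ∀ g : G, g ^ p ∈ h.ker := by
    intro g; simp [MonoidHom.mem_ker, map_pow, hpow g]
  have hnormal : ∀ K : Subgroup G, h.ker ≤ K → K.Normal := by
    intro K hK
    constructor
    intro m hm g
    have hcomm : g * m * g⁻¹ * m⁻¹ ∈ h.ker := by
      rw [MonoidHom.mem_ker]
      have := (Subgroup.mem_center_iff.mp (hcent m)) (h g)
      simp only [map_mul, map_inv]
      rw [this]
      group
    have : (g * m * g⁻¹ * m⁻¹) * m ∈ K := K.mul_mem (hK hcomm) hm
    simpa [mul_assoc] using this
  -- key fact: h (h x) = 1 for all x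
  have key : ∀ x : G, h (h x) = 1 := by
    by_contra hc
    push_neg at hc
    obtain ⟨x, hx⟩ := hc
    set z := h x with hz
    have hzc : z ∈ Subgroup.center G := hcent x
    have hzp : z ^ p = 1 := hpow x
    have hzker : z ∉ h.ker := by rwa [MonoidHom.mem_ker]
    -- a maximal subgroup containing ker h and avoiding z
    have : ∃ M ∈ {K : Subgroup G | h.ker ≤ K ∧ z ∉ K},
        ∀ K ∈ {K : Subgroup G | h.ker ≤ K ∧ z ∉ K}, M ≤ K → M = K := by
      obtain ⟨M, hM, hMm⟩ := Set.Finite.exists_maximalFor id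
        {K : Subgroup G | h.ker ≤ K ∧ z ∉ K} (Set.toFinite _) ⟨h.ker, le_refl _, hzker⟩
      exact ⟨M, hM, fun K hK hMK => le_antisymm hMK (hMm hK hMK)⟩
    obtain ⟨M, ⟨hM1, hM2⟩, hMmax⟩ := this
    haveI := hnormal M hM1
    -- the coprime trick
    have coprime_trick : ∀ (g : G) (n : ℤ), ¬ (p : ℤ) ∣ n → g ^ p ∈ M →
        ∀ N : Subgroup G, M ≤ N → g ^ n ∈ N → g ∈ N := by
      intro g n hnd hgp N hMN hgn
      have hcop : IsCoprime (n : ℤ) (p : ℤ) :=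
        ((Nat.prime_iff_prime_int.mp hp).coprime_iff_not_dvd.mpr hnd).symm
      obtain ⟨a, b, hab⟩ := hcop
      have : g = (g ^ n) ^ a * (g ^ p) ^ b := by
        rw [← zpow_natCast g p, ← zpow_mul, ← zpow_mul, ← zpow_add, mul_comm n a,
          mul_comm (p:ℤ) b, hab, zpow_one]
      rw [this]
      exact N.mul_mem (N.zpow_mem hgn a) (N.zpow_mem (hMN hgp) b)
    -- M ⊔ ⟨z⟩ = ⊤
    have hsup : M ⊔ Subgroup.closure {z} = ⊤ := by
      by_contra hne
      obtain ⟨g, hg⟩ : ∃ g : G, g ∉ M ⊔ Subgroup.closure {z} := by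
        by_contra hall
        push_neg at hall
        exact hne (Subgroup.eq_top_iff' _ |>.mpr hall)
      have hgM : g ∉ M := fun hgM => hg (Subgroup.mem_sup_left hgM)
      set K := M ⊔ Subgroup.closure {g} with hK
      have hkerK : h.ker ≤ K := le_trans hM1 le_sup_left
      have hMK : M ≤ K := le_sup_left
      have hMneK : M ≠ K := by
        intro he
        exact hgM (he ▸ Subgroup.mem_sup_right (Subgroup.mem_closure_singleton.mpr ⟨1, zpow_one g⟩))
      have hzK : z ∈ K := by
        by_contra hzK
        exact hMneK (hMmax K ⟨hkerK, hzK⟩ hMK)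
      -- z = m * g^n with m ∈ M
      have hzK' : z ∈ (↑(M ⊔ Subgroup.closure {g}) : Set G) := hzK
      rw [Subgroup.normal_mul] at hzK'
      obtain ⟨m, hm, c, hcmem, hmc⟩ := hzK'
      have hmc' : m * c = z := hmc
      obtain ⟨n, hn⟩ := Subgroup.mem_closure_singleton.mp hcmem
      have hgn : g ^ n = m⁻¹ * z := by rw [hn, ← hmc']; group
      have hnd : ¬ (p : ℤ) ∣ n := by
        intro ⟨k, hk⟩
        apply hM2
        have : g ^ n ∈ M := by
          rw [hk, zpow_mul, zpow_natCast]
          exact M.zpow_mem (hM1 (hker_pow g)) k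
        have : z ∈ M := by
          have := M.mul_mem hm this
          rwa [hn, hmc'] at this
        exact this
      have hgp : g ^ p ∈ M := hM1 (hker_pow g)
      have : g ∈ M ⊔ Subgroup.closure {z} := by
        apply coprime_trick g n hnd hgp _ le_sup_left
        rw [hgn]
        exact Subgroup.mul_mem _ (Subgroup.mem_sup_left (M.inv_mem hm))
          (Subgroup.mem_sup_right (Subgroup.mem_closure_singleton.mpr ⟨1, zpow_one z⟩))
      exact hg this
    -- disjointness
    have hdisj : Disjoint (Subgroup.closure {z}) M := by
      rw [Subgroup.disjoint_def]
      intro y hy hyM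
      obtain ⟨n, hn⟩ := Subgroup.mem_closure_singleton.mp hy
      by_cases hnd : (p : ℤ) ∣ n
      · obtain ⟨k, hk⟩ := hnd
        rw [← hn, hk, zpow_mul, zpow_natCast, hzp, one_zpow]
      · exfalso
        have hzpM : z ^ p ∈ M := by rw [hzp]; exact M.one_mem
        exact hM2 (coprime_trick z n hnd hzpM M le_rfl (by rw [hn]; exact hyM))
    -- contradiction with purely non-abelian
    apply hpna
    refine ⟨Subgroup.closure {z}, M, ?_, hnormal M hM1, hdisj, by rw [sup_comm]; exact hsup, ?_, ?_⟩
    · constructor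
      intro a ha g
      have hac : a ∈ Subgroup.center G := by
        have : Subgroup.closure {z} ≤ Subgroup.center G :=
          Subgroup.closure_le _ |>.mpr (by simpa using hzc)
        exact this ha
      rw [Subgroup.mem_center_iff.mp hac g]
      simpa [mul_assoc] using ha
    · intro hbot
      have hz1 : z ∈ (⊥ : Subgroup G) := hbot ▸ Subgroup.subset_closure rfl
      rw [Subgroup.mem_bot] at hz1
      exact hx (by rw [hz1, map_one])
    · intro a b ha hb
      have hac : a ∈ Subgroup.center G := by
        have : Subgroup.closure {z} ≤ Subgroup.center G :=
          Subgroup.closure_le _ |>.mpr (by simpa using hzc)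
        exact this ha
      exact (Subgroup.mem_center_iff.mp hac b).symm
  -- now the four conclusions
  have hmul : ∀ x y : G, (x * y) * h (x * y) = (x * h x) * (y * h y) := by
    intro x y
    rw [map_mul]
    have := Subgroup.mem_center_iff.mp (hcent x) y
    calc x * y * (h x * h y) = x * (y * h x) * h y := by group
    _ = x * (h x * y) * h y := by rw [← this]
    _ = x * h x * (y * h y) := by group
  have hinj : Function.Injective (fun x : G => x * h x) := by
    intro a b hab
    simp only at hab
    have hha : h a = h b := by
      have := congrArg h hab
      simpa [map_mul, key] using this
    rw [hha] at hab
    exact mul_right_cancel hab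
  have hiter : ∀ n : ℕ, ∀ x : G, (fun x : G => x * h x)^[n] x = x * (h x) ^ n := by
    intro n
    induction n with
    | zero => intro x; simp
    | succ n ih =>
      intro x
      rw [Function.iterate_succ_apply', ih]
      show x * h x ^ n * h (x * h x ^ n) = x * h x ^ (n + 1)
      rw [map_mul, map_pow, key, one_pow, mul_one, pow_succ, mul_assoc]
  refine ⟨Finite.injective_iff_bijective.mp hinj, hmul, ?_, ?_⟩
  · funext x
    rw [hiter p x, hpow x, mul_one, id]
  · intro hid
    obtain ⟨x, hx⟩ := hnt
    have := congrFun hid x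
    simp only [id] at this
    apply hx
    have : x * h x = x := this
    simpa using this
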